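/- arXiv:math/0305030 — 3 statements merged into one kernel-verified Lean document; each statement's English description precedes it below -/
import Mathlib

section
/- If H is a max-infinitely divisible distribution function on ℝ^d (i.e. H^s is a distribution function for every s > 0) and G is a probability distribution on (0,∞) with Laplace transform φ, then the function F(x) = ∫₀^∞ H(x)^s dG(s) satisfies F(x) = φ(-log H(x)) for all x with H(x) > 0, and F is a distribution function on ℝ^d. -/
open MeasureTheory

/-- `F` is a distribution function on `ℝ^d`. -/
def IsDistFun (d : ℕ) (F : (Fin d → ℝ) → ℝ) : Prop :=
  ∃ μ : Measure (Fin d → ℝ), IsProbabilityMeasure μ ∧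
    ∀ x, F x = (μ {y | ∀ i, y i ≤ x i}).toReal

/-- For a fixed nonnegative base, `s ↦ c ^ s` is measurable. -/
lemma measurable_rpow_const_base (c : ℝ) (hc : 0 ≤ c) :
    Measurable fun s : ℝ => c ^ s := by
  rcases hc.lt_or_eq with h | h
  · have he : (fun s : ℝ => c ^ s) = fun s => Real.exp (Real.log c * s) :=
      funext fun s => Real.rpow_def_of_pos h s
    rw [he]
    exact Real.measurable_exp.comp (measurable_id.const_mul _)
  · have he : (fun s : ℝ => c ^ s) = fun s => if s = 0 then (1 : ℝ) else 0 := by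
      funext s
      rcases eq_or_ne s 0 with hs | hs
      · simp [hs, ← h]
      · simp [hs, ← h, Real.zero_rpow hs]
    rw [he]
    exact Measurable.ite (measurableSet_singleton 0) measurable_const measurable_const

/-- If `H` is a max-infinitely divisible d.f. on `ℝ^d` (`H^s` is a d.f. for every `s > 0`)
and `G` is a probability measure on `(0,∞)` with Laplace transform `φ`, then
`F(x) = ∫ H(x)^s dG(s)` satisfies `F(x) = φ(-log H(x))` wherever `H(x) > 0`,
and `F` is a distribution function on `ℝ^d`. -/
theorem mixture_of_MID_is_phi_of_neg_log
    (d : ℕ) (hd : 2 ≤ d) (H : (Fin d → ℝ) → ℝ)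
    (hMID : ∀ s : ℝ, 0 < s → IsDistFun d (fun x => H x ^ s))
    (G : Measure ℝ) [IsProbabilityMeasure G] (hG : G (Set.Ioi (0:ℝ)) = 1)
    (φ : ℝ → ℝ)
    (hφ : ∀ v : ℝ, 0 ≤ v → φ v = ∫ s, Real.exp (-v * s) ∂G)
    (F : (Fin d → ℝ) → ℝ)
    (hF : ∀ x, F x = ∫ s, H x ^ s ∂G) :
    (∀ x, 0 < H x → F x = φ (-Real.log (H x))) ∧ IsDistFun d F := by
  classical
  set R : (Fin d → ℝ) → Set (Fin d → ℝ) := fun x => {y | ∀ i, y i ≤ x i} with hR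
  -- choose the measures witnessing max-infinite divisibility
  set ν : ℝ → Measure (Fin d → ℝ) :=
    fun s => if h : 0 < s then (hMID s h).choose else (hMID 1 one_pos).choose with hν
  have hν_spec : ∀ s : ℝ, ∀ hs : 0 < s,
      IsProbabilityMeasure (ν s) ∧ ∀ x, H x ^ s = ((ν s) (R x)).toReal := by
    intro s hs
    simp only [hν, dif_pos hs]
    exact ⟨(hMID s hs).choose_spec.1, fun x => (hMID s hs).choose_spec.2 x⟩
  have hν_prob : ∀ s : ℝ, IsProbabilityMeasure (ν s) := by
    intro s
    by_cases hs : 0 < s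
    · exact (hν_spec s hs).1
    · simp only [hν, dif_neg hs]
      exact (hMID 1 one_pos).choose_spec.1
  have hH0 : ∀ x, 0 ≤ H x := by
    intro x
    have h := (hν_spec 1 one_pos).2 x
    rw [Real.rpow_one] at h
    rw [h]; exact ENNReal.toReal_nonneg
  have hH1 : ∀ x, H x ≤ 1 := by
    intro x
    have h := (hν_spec 1 one_pos).2 x
    rw [Real.rpow_one] at h
    haveI := hν_prob 1
    rw [h]
    calc ((ν 1) (R x)).toReal ≤ (1 : ENNReal).toReal :=
          ENNReal.toReal_mono ENNReal.one_ne_top prob_le_one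
      _ = 1 := by simp
  have hνR : ∀ s : ℝ, 0 < s → ∀ x, (ν s) (R x) = ENNReal.ofReal (H x ^ s) := by
    intro s hs x
    haveI := hν_prob s
    have h := (hν_spec s hs).2 x
    rw [h, ENNReal.ofReal_toReal (measure_ne_top _ _)]
  have hRmeas : ∀ x, MeasurableSet (R x) := by
    intro x
    have h : R x = ⋂ i, (fun y : Fin d → ℝ => y i) ⁻¹' Set.Iic (x i) := by
      ext y; simp [hR, Set.mem_iInter]
    rw [h]
    exact MeasurableSet.iInter fun i => (measurable_pi_apply i) measurableSet_Iic
  -- the rectangles generate the product σ-algebra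
  have hgen : (inferInstance : MeasurableSpace (Fin d → ℝ)) =
      MeasurableSpace.generateFrom {A | ∃ x, A = R x} := by
    refine le_antisymm ?_ (MeasurableSpace.generateFrom_le ?_)
    · have heval : ∀ i : Fin d,
          @Measurable _ _ (MeasurableSpace.generateFrom {A | ∃ x, A = R x}) _
            (fun y : Fin d → ℝ => y i) := by
        intro i
        apply measurable_of_Iic
        intro a
        have h : (fun y : Fin d → ℝ => y i) ⁻¹' Set.Iic a =
            ⋃ n : ℕ, R (fun j => if j = i then a else n) := by
          ext y
          simp only [Set.mem_preimage, Set.mem_Iic, Set.mem_iUnion, hR, Set.mem_setOf_eq]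
          constructor
          · intro hy
            obtain ⟨M, hM⟩ := Finite.exists_le y
            obtain ⟨n, hn⟩ := exists_nat_ge M
            refine ⟨n, fun j => ?_⟩
            by_cases hj : j = i
            · simpa [hj] using hy
            · simpa [hj] using (hM j).trans hn
          · rintro ⟨n, hn⟩
            simpa using hn i
        rw [h]
        exact MeasurableSet.iUnion fun n =>
          MeasurableSpace.measurableSet_generateFrom ⟨_, rfl⟩
      have hid : @Measurable _ _ (MeasurableSpace.generateFrom {A | ∃ x, A = R x}) _
          (id : (Fin d → ℝ) → (Fin d → ℝ)) :=
        (@measurable_pi_iff (Fin d → ℝ) (Fin d) (fun _ => ℝ)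
          (MeasurableSpace.generateFrom {A | ∃ x, A = R x}) _ id).mpr heval
      exact fun A hA => hid hA
    · rintro A ⟨x, rfl⟩
      exact hRmeas x
  have hpi : IsPiSystem {A : Set (Fin d → ℝ) | ∃ x, A = R x} := by
    rintro _ ⟨x, rfl⟩ _ ⟨x', rfl⟩ _
    refine ⟨fun i => min (x i) (x' i), ?_⟩
    ext y
    simp only [hR, Set.mem_inter_iff, Set.mem_setOf_eq, le_min_iff]
    exact ⟨fun ⟨h1, h2⟩ i => ⟨h1 i, h2 i⟩, fun h => ⟨fun i => (h i).1, fun i => (h i).2⟩⟩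
  -- measurability of s ↦ ν s A for every measurable A
  have hmeas_all : ∀ A : Set (Fin d → ℝ), MeasurableSet A →
      Measurable fun s => (ν s) A := by
    intro A hA
    refine MeasurableSpace.induction_on_inter
      (C := fun A _ => Measurable fun s => (ν s) A) hgen hpi ?_ ?_ ?_ ?_ A hA
    · simp only [measure_empty]; exact measurable_const
    · rintro _ ⟨x, rfl⟩
      have h : (fun s => (ν s) (R x)) =
          fun s => if 0 < s then ENNReal.ofReal (H x ^ s) else ENNReal.ofReal (H x) := by
        funext s
        by_cases hs : 0 < s
        · rw [if_pos hs, hνR s hs]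
        · rw [if_neg hs]
          have h1 : ν s = ν 1 := by simp only [hν, dif_neg hs, dif_pos one_pos]
          rw [h1, hνR 1 one_pos, Real.rpow_one]
      rw [h]
      exact Measurable.ite measurableSet_Ioi
        (ENNReal.measurable_ofReal.comp (measurable_rpow_const_base (H x) (hH0 x)))
        measurable_const
    · intro t ht hrec
      have h : (fun s => (ν s) tᶜ) = fun s => 1 - (ν s) t := by
        funext s
        haveI := hν_prob s
        rw [measure_compl ht (measure_ne_top _ _), measure_univ]
      rw [h]
      exact measurable_const.sub hrec
    · intro f hdisj hmeasf hrec
      have h : (fun s => (ν s) (⋃ i, f i)) = fun s => ∑' i, (ν s) (f i) :=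
        funext fun s => measure_iUnion hdisj hmeasf
      rw [h]
      exact Measurable.ennreal_tsum hrec
  have hνmeas : Measurable ν := Measure.measurable_measure.mpr hmeas_all
  have hbind : ∀ A : Set (Fin d → ℝ), MeasurableSet A →
      (G.bind ν) A = ∫⁻ s, (ν s) A ∂G := fun A hA => Measure.bind_apply hA hνmeas.aemeasurable
  have hprob : IsProbabilityMeasure (G.bind ν) := by
    constructor
    rw [hbind _ MeasurableSet.univ]
    have h : ∀ s : ℝ, (ν s) Set.univ = 1 := fun s => (hν_prob s).measure_univ
    simp only [h, lintegral_one, measure_univ]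
  have hae : ∀ᵐ s ∂G, 0 < s := by
    have hcompl0 : G (Set.Ioi (0:ℝ))ᶜ = 0 := by
      rw [measure_compl measurableSet_Ioi (measure_ne_top _ _), hG, measure_univ, tsub_self]
    rw [MeasureTheory.ae_iff]
    have : {s : ℝ | ¬ 0 < s} = (Set.Ioi (0:ℝ))ᶜ := by
      ext s; simp [not_lt]
    rw [this]; exact hcompl0
  constructor
  · -- F x = φ (-log H x) when H x > 0
    intro x hx
    have hlog : 0 ≤ -Real.log (H x) :=
      neg_nonneg.mpr (Real.log_nonpos (hH0 x) (hH1 x))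
    rw [hF x, hφ _ hlog]
    refine integral_congr_ae (Filter.Eventually.of_forall fun s => ?_)
    rw [neg_neg, Real.rpow_def_of_pos hx]
  · -- F is a distribution function, witnessed by the mixture measure
    refine ⟨G.bind ν, hprob, fun x => ?_⟩
    have h1 : (G.bind ν) (R x) = ∫⁻ s, ENNReal.ofReal (H x ^ s) ∂G := by
      rw [hbind _ (hRmeas x)]
      refine lintegral_congr_ae ?_
      filter_upwards [hae] with s hs
      exact hνR s hs x
    have h2 : ∫ s, H x ^ s ∂G = (∫⁻ s, ENNReal.ofReal (H x ^ s) ∂G).toReal :=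
      integral_eq_lintegral_of_nonneg_ae
        (Filter.Eventually.of_forall fun s => Real.rpow_nonneg (hH0 x) s)
        ((measurable_rpow_const_base (H x) (hH0 x)).aestronglyMeasurable)
    rw [hF x, h2]
    exact congrArg ENNReal.toReal h1.symm
end

section
/- Let U ≥ 0 be a random variable with Laplace transform φ, and for each θ > 0 let N_θ be the nonnegative-integer-valued random variable with PGF P_θ(s) = s^j φ((1−s^k)/θ), where j ≥ 0 and k ≥ 1 are fixed integers. Then θ·N_θ converges in distribution to k·U as θ → 0. -/
open MeasureTheory Filter Topology

noncomputable def pw (l : ℝ) (m : ℕ) : ℝ := Real.exp (-l) * l ^ m / (m.factorial : ℝ)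

lemma exp_tsum (x : ℝ) : ∑' m : ℕ, x ^ m / (m.factorial : ℝ) = Real.exp x := by
  rw [Real.exp_eq_exp_ℝ]
  exact (NormedSpace.expSeries_div_hasSum_exp x).tsum_eq

lemma pw_nonneg (l : ℝ) (hl : 0 ≤ l) (m : ℕ) : 0 ≤ pw l m := by
  unfold pw; positivity

lemma pw_summable (l : ℝ) : Summable (pw l) := by
  unfold pw
  simp_rw [mul_div_assoc]
  exact (Real.summable_pow_div_factorial l).mul_left _

lemma tsum_pw (l : ℝ) : ∑' m, pw l m = 1 := by
  unfold pw
  simp_rw [mul_div_assoc]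
  rw [tsum_mul_left, exp_tsum, ← Real.exp_add]
  simp

lemma pw_le_one (l : ℝ) (hl : 0 ≤ l) (m : ℕ) : pw l m ≤ 1 := by
  rw [← tsum_pw l]
  exact Summable.le_tsum (pw_summable l) m (fun n _ => pw_nonneg l hl n)

lemma summable_mul_pow (x : ℝ) (hx : 0 ≤ x) (c : ℕ) :
    Summable (fun m : ℕ => (m : ℝ) ^ c * (x ^ m / (m.factorial : ℝ))) := by
  refine Summable.of_nonneg_of_le (fun m => by positivity) (fun m => ?_)
    (Real.summable_pow_div_factorial ((2 : ℝ) ^ c * x))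
  have h1 : (m : ℝ) ^ c ≤ ((2 : ℝ) ^ c) ^ m := by
    calc (m : ℝ) ^ c ≤ ((2 : ℝ) ^ m) ^ c := by
          gcongr
          exact_mod_cast (Nat.lt_two_pow_self (n := m)).le
      _ = ((2 : ℝ) ^ c) ^ m := by rw [← pow_mul, ← pow_mul, Nat.mul_comm]
    
  calc (m : ℝ) ^ c * (x ^ m / m.factorial) ≤ ((2:ℝ)^c) ^ m * (x ^ m / m.factorial) := by
        gcongr
    _ = ((2:ℝ) ^ c * x) ^ m / m.factorial := by rw [mul_pow, mul_div_assoc]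

lemma tsum_mom1 (x : ℝ) (hx : 0 ≤ x) :
    ∑' m : ℕ, (m : ℝ) * (x ^ m / (m.factorial : ℝ)) = x * Real.exp x := by
  have hs : Summable (fun m : ℕ => (m : ℝ) * (x ^ m / (m.factorial : ℝ))) := by
    simpa using summable_mul_pow x hx 1
  rw [Summable.tsum_eq_zero_add hs]
  have key : ∀ m : ℕ, ((m + 1 : ℕ) : ℝ) * (x ^ (m + 1) / ((m + 1).factorial : ℝ))
      = x * (x ^ m / (m.factorial : ℝ)) := by
    intro m
    have h2 : ((m.factorial : ℝ)) ≠ 0 := Nat.cast_ne_zero.2 m.factorial_pos.ne'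
    rw [Nat.factorial_succ]
    push_cast
    field_simp
    ring
  rw [tsum_congr key, tsum_mul_left, exp_tsum]
  simp

lemma tsum_mom2 (x : ℝ) (hx : 0 ≤ x) :
    ∑' m : ℕ, (m : ℝ) * ((m : ℝ) - 1) * (x ^ m / (m.factorial : ℝ)) = x ^ 2 * Real.exp x := by
  have hs2 := summable_mul_pow x hx 2
  have hs1 : Summable (fun m : ℕ => (m : ℝ) * (x ^ m / (m.factorial : ℝ))) := by
    simpa using summable_mul_pow x hx 1
  have hs : Summable (fun m : ℕ => (m : ℝ) * ((m : ℝ) - 1) * (x ^ m / (m.factorial : ℝ))) :=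
    (hs2.sub hs1).congr (fun m => by ring)
  rw [Summable.tsum_eq_zero_add hs]
  have key : ∀ m : ℕ, ((m + 1 : ℕ) : ℝ) * (((m + 1 : ℕ) : ℝ) - 1) * (x ^ (m + 1) / ((m + 1).factorial : ℝ))
      = x * ((m : ℝ) * (x ^ m / (m.factorial : ℝ))) := by
    intro m
    have h2 : ((m.factorial : ℝ)) ≠ 0 := Nat.cast_ne_zero.2 m.factorial_pos.ne'
    rw [Nat.factorial_succ]
    push_cast
    field_simp
    ring
  rw [tsum_congr key, tsum_mul_left, tsum_mom1 x hx]
  simp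
  ring

lemma tsum_sq_pw (l : ℝ) (hl : 0 ≤ l) : ∑' m : ℕ, ((m : ℝ) - l) ^ 2 * pw l m = l := by
  have hs2 := summable_mul_pow l hl 2
  have hs1 : Summable (fun m : ℕ => (m : ℝ) * (l ^ m / (m.factorial : ℝ))) := by
    simpa using summable_mul_pow l hl 1
  have hs0 := Real.summable_pow_div_factorial l
  have hs12 : Summable (fun m : ℕ => (m : ℝ) * ((m : ℝ) - 1) * (l ^ m / (m.factorial : ℝ))) :=
    (hs2.sub hs1).congr (fun m => by ring)
  have expand : ∀ m : ℕ, ((m : ℝ) - l) ^ 2 * pw l m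
      = Real.exp (-l) * ((m : ℝ) * ((m : ℝ) - 1) * (l ^ m / (m.factorial : ℝ))
        + ((1 - 2 * l) * ((m : ℝ) * (l ^ m / (m.factorial : ℝ)))
        + l ^ 2 * (l ^ m / (m.factorial : ℝ)))) := by
    intro m; unfold pw; ring
  rw [tsum_congr expand, tsum_mul_left,
    Summable.tsum_add hs12 ((hs1.mul_left (1 - 2*l)).add (hs0.mul_left (l^2))),
    Summable.tsum_add (hs1.mul_left (1 - 2*l)) (hs0.mul_left (l^2)),
    tsum_mul_left, tsum_mul_left, tsum_mom2 l hl, tsum_mom1 l hl, exp_tsum]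
  have hexp : Real.exp (-l) * Real.exp l = 1 := by rw [← Real.exp_add]; simp
  linear_combination l * hexp

section B
lemma tendsto_coeff (c : ℕ → ℝ) (hc0 : ∀ n, 0 ≤ c n) (hcs : Summable c) :
    Tendsto (fun s : ℝ => ∑' m : ℕ, c m * s ^ m) (nhdsWithin 0 (Set.Ioi 0)) (nhds (c 0)) := by
  rw [← tendsto_sub_nhds_zero_iff]
  apply squeeze_zero_norm' (a := fun s => (∑' n, c n) * s)
  · filter_upwards [Ioo_mem_nhdsGT_of_mem (Set.left_mem_Ico.2 zero_lt_one)] with s hs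
    have hsum : Summable (fun m : ℕ => c m * s ^ m) :=
      Summable.of_nonneg_of_le (fun m => by have := hc0 m; have := hs.1.le; positivity)
        (fun m => mul_le_of_le_one_right (hc0 m) (pow_le_one₀ hs.1.le hs.2.le)) hcs
    have htail : Summable (fun m : ℕ => c (m + 1) * s ^ (m + 1)) := by
      simpa using (summable_nat_add_iff 1).2 hsum
    have h1 : (∑' m : ℕ, c m * s ^ m) - c 0 = ∑' m : ℕ, c (m + 1) * s ^ (m + 1) := by
      rw [Summable.tsum_eq_zero_add hsum]; simp
    rw [h1, Real.norm_eq_abs]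
    have htail' : Summable (fun m : ℕ => c (m + 1)) := (summable_nat_add_iff 1).2 hcs
    have h2 : ∑' m : ℕ, c (m + 1) * s ^ (m + 1) ≤ ∑' m : ℕ, c (m + 1) * s := by
      refine Summable.tsum_le_tsum (fun m => ?_) htail (htail'.mul_right s)
      refine mul_le_mul_of_nonneg_left ?_ (hc0 _)
      calc s ^ (m + 1) ≤ s ^ 1 := pow_le_pow_of_le_one hs.1.le hs.2.le (by omega)
        _ = s := pow_one s
    have h3 : 0 ≤ ∑' m : ℕ, c (m + 1) * s ^ (m + 1) :=
      tsum_nonneg (fun m => by have := hc0 (m+1); have := hs.1.le; positivity)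
    rw [abs_of_nonneg h3]
    refine h2.trans ?_
    rw [tsum_mul_right]
    refine mul_le_mul_of_nonneg_right ?_ hs.1.le
    have := Summable.tsum_eq_zero_add hcs
    have h4 : 0 ≤ c 0 := hc0 0
    linarith [this]
  · have : Tendsto (fun s : ℝ => (∑' n, c n) * s) (nhds 0) (nhds ((∑' n, c n) * 0)) :=
      (tendsto_id.const_mul _)
    rw [mul_zero] at this
    exact this.mono_left nhdsWithin_le_nhds

lemma coeff_unique (a b : ℕ → ℝ) (ha0 : ∀ n, 0 ≤ a n) (hb0 : ∀ n, 0 ≤ b n)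
    (hsa : Summable a) (hsb : Summable b)
    (h : ∀ s ∈ Set.Ioo (0:ℝ) 1, ∑' n, a n * s ^ n = ∑' n, b n * s ^ n) : a = b := by
  have hIoo : Set.Ioo (0:ℝ) 1 ∈ nhdsWithin (0:ℝ) (Set.Ioi 0) :=
    Ioo_mem_nhdsGT_of_mem (Set.left_mem_Ico.2 zero_lt_one)
  have eqcoef : ∀ n : ℕ,
      (∀ s ∈ Set.Ioo (0:ℝ) 1, ∑' m, a (m + n) * s ^ m = ∑' m, b (m + n) * s ^ m) →
      a n = b n := by
    intro n hn
    have hA := tendsto_coeff (fun m => a (m + n)) (fun m => ha0 _) ((summable_nat_add_iff n).2 hsa)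
    have hB := tendsto_coeff (fun m => b (m + n)) (fun m => hb0 _) ((summable_nat_add_iff n).2 hsb)
    have hB' : Tendsto (fun s : ℝ => ∑' m : ℕ, a (m + n) * s ^ m)
        (nhdsWithin 0 (Set.Ioi 0)) (nhds (b (0 + n))) := by
      refine hB.congr' ?_
      filter_upwards [hIoo] with s hs using (hn s hs).symm
    simpa using tendsto_nhds_unique hA hB'
  have main : ∀ n : ℕ, ∀ s ∈ Set.Ioo (0:ℝ) 1,
      ∑' m, a (m + n) * s ^ m = ∑' m, b (m + n) * s ^ m := by
    intro n
    induction n with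
    | zero => simpa using h
    | succ n ih =>
      have han : a n = b n := eqcoef n ih
      intro s hs
      have hs0 : (0:ℝ) < s := hs.1
      have hsum : ∀ (c : ℕ → ℝ), (∀ i, 0 ≤ c i) → Summable c → ∀ d : ℕ,
          Summable (fun m : ℕ => c (m + d) * s ^ m) := by
        intro c hc0 hcs d
        refine Summable.of_nonneg_of_le (fun m => by have := hc0 (m+d); positivity)
          (fun m => mul_le_of_le_one_right (hc0 _) (pow_le_one₀ hs0.le hs.2.le))
          ((summable_nat_add_iff d).2 hcs)
      have ea := Summable.tsum_eq_zero_add (hsum a ha0 hsa n)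
      have eb := Summable.tsum_eq_zero_add (hsum b hb0 hsb n)
      have shift : ∀ (c : ℕ → ℝ), (fun m : ℕ => c (m + 1 + n) * s ^ (m + 1))
          = fun m : ℕ => s * (c (m + (n + 1)) * s ^ m) := by
        intro c
        funext m
        have : m + 1 + n = m + (n + 1) := by omega
        rw [this, pow_succ]
        ring
      rw [shift a] at ea
      rw [shift b] at eb
      rw [tsum_mul_left] at ea eb
      have := ih s hs
      rw [ea, eb] at this
      simp only [pow_zero, mul_one, zero_add] at this
      have hcancel : s * ∑' m, a (m + (n + 1)) * s ^ m = s * ∑' m, b (m + (n + 1)) * s ^ m := by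
        linarith
      exact mul_left_cancel₀ hs0.ne' hcancel
  funext n
  exact eqcoef n (main n)
end B
section C

lemma integral_comp_nat {Ω : Type*} [MeasurableSpace Ω] (P : Measure Ω) [IsProbabilityMeasure P]
    (N : Ω → ℕ) (hN : Measurable N) (g : ℕ → ℝ) (C : ℝ) (hg : ∀ n, |g n| ≤ C) :
    ∫ ω, g (N ω) ∂P = ∑' n, (P (N ⁻¹' {n})).toReal * g n := by
  have hmap : IsProbabilityMeasure (P.map N) := Measure.isProbabilityMeasure_map hN.aemeasurable
  have hgm : Measurable g := measurable_from_top
  have hint : Integrable g (P.map N) := by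
    refine (integrable_const C).mono' hgm.aestronglyMeasurable (ae_of_all _ fun n => ?_)
    rw [Real.norm_eq_abs]; exact hg n
  rw [← integral_map hN.aemeasurable hint.1, integral_countable' hint]
  congr 1
  funext n
  rw [map_measureReal_apply hN (measurableSet_singleton n), smul_eq_mul, measureReal_def]

lemma expand_exp (θ u s : ℝ) (hθ : 0 < θ) (j k : ℕ) :
    s ^ j * Real.exp (-((1 - s ^ k) / θ) * u) = ∑' m : ℕ, pw (u / θ) m * s ^ (j + k * m) := by
  have h1 : ∀ m : ℕ, pw (u / θ) m * s ^ (j + k * m)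
      = (s ^ j * Real.exp (-(u / θ))) * ((s ^ k * (u / θ)) ^ m / (m.factorial : ℝ)) := by
    intro m
    unfold pw
    rw [pow_add, pow_mul, mul_pow]
    ring
  rw [tsum_congr h1, tsum_mul_left, exp_tsum, mul_assoc, ← Real.exp_add]
  congr 2
  field_simp
  ring

lemma abs_tsum_pw_mul_le (l : ℝ) (hl : 0 ≤ l) (r : ℕ → ℝ) (C : ℝ) (hr : ∀ m, |r m| ≤ C) :
    |∑' m, pw l m * r m| ≤ C := by
  have habs : ∀ m, |pw l m * r m| ≤ pw l m * C := by
    intro m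
    rw [abs_mul, abs_of_nonneg (pw_nonneg l hl m)]
    exact mul_le_mul_of_nonneg_left (hr m) (pw_nonneg l hl m)
  have hSC : Summable (fun m => pw l m * C) := (pw_summable l).mul_right C
  have hSabs : Summable (fun m => |pw l m * r m|) :=
    Summable.of_nonneg_of_le (fun m => abs_nonneg _) habs hSC
  have hS : Summable (fun m => pw l m * r m) := hSabs.of_abs
  have hnorm : Summable (fun m => ‖pw l m * r m‖) := hSabs
  calc |∑' m, pw l m * r m| = ‖∑' m, pw l m * r m‖ := (Real.norm_eq_abs _).symm
    _ ≤ ∑' m, ‖pw l m * r m‖ := norm_tsum_le_tsum_norm hnorm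
    _ ≤ ∑' m, pw l m * C := Summable.tsum_le_tsum (fun m => habs m) hnorm hSC
    _ = C := by rw [tsum_mul_right, tsum_pw, one_mul]

lemma summable_pw_mul_of_bdd (l : ℝ) (hl : 0 ≤ l) (r : ℕ → ℝ) (C : ℝ) (hr : ∀ m, |r m| ≤ C) :
    Summable (fun m => pw l m * r m) := by
  have habs : ∀ m, |pw l m * r m| ≤ pw l m * C := by
    intro m
    rw [abs_mul, abs_of_nonneg (pw_nonneg l hl m)]
    exact mul_le_mul_of_nonneg_left (hr m) (pw_nonneg l hl m)
  exact (Summable.of_nonneg_of_le (fun m => abs_nonneg _) habs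
    ((pw_summable l).mul_right C)).of_abs

end C

section D

set_option maxHeartbeats 1000000 in
lemma tendsto_G (f : BoundedContinuousFunction ℝ ℝ) (j k : ℕ) (hk : 1 ≤ k) (u : ℝ) (hu : 0 ≤ u) :
    Tendsto (fun θ : ℝ => ∑' m : ℕ, pw (u / θ) m * f (θ * ((j + k * m : ℕ) : ℝ)))
      (nhdsWithin 0 (Set.Ioi 0)) (nhds (f ((k : ℝ) * u))) := by
  have hk1 : (1:ℝ) ≤ (k:ℝ) := by exact_mod_cast hk
  rw [Metric.tendsto_nhds]
  intro ε hε
  obtain ⟨δ, hδ, hfδ⟩ :=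
    Metric.continuousAt_iff.1 (f.continuous.continuousAt (x := (k:ℝ) * u)) (ε/2) (by positivity)
  set B : ℝ := 2 * ‖f‖ with hB
  have hB0 : (0:ℝ) ≤ B := by positivity
  set θ₀ : ℝ := min (δ / (2 * (j+1))) (ε * δ^2 / (16 * (B+1) * k^2 * (u+1))) with hθ₀
  have hθ₀pos : 0 < θ₀ := by
    apply lt_min
    · positivity
    · have : (0:ℝ) < (k:ℝ)^2 := by positivity
      positivity
  filter_upwards [Ioo_mem_nhdsGT_of_mem (Set.left_mem_Ico.2 hθ₀pos)] with θ hθ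
  obtain ⟨hθ1, hθ2⟩ := hθ
  set l : ℝ := u / θ with hl
  have hl0 : 0 ≤ l := div_nonneg hu hθ1.le
  set fk : ℝ := f ((k:ℝ) * u) with hfk
  set F : ℕ → ℝ := fun m => f (θ * ((j + k * m : ℕ) : ℝ)) with hFdef
  have hFb : ∀ m, |F m| ≤ ‖f‖ := by
    intro m
    rw [← Real.norm_eq_abs]
    exact f.norm_coe_le_norm _
  have hfkb : |fk| ≤ ‖f‖ := by rw [← Real.norm_eq_abs]; exact f.norm_coe_le_norm _
  have SF : Summable (fun m => pw l m * F m) := summable_pw_mul_of_bdd l hl0 F ‖f‖ hFb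
  have S2 : Summable (fun m : ℕ => ((m:ℝ) - l)^2 * pw l m) := by
    have := summable_mul_pow l hl0 2
    have h1 : Summable (fun m : ℕ => (m:ℝ) * (l ^ m / (m.factorial : ℝ))) := by
      simpa using summable_mul_pow l hl0 1
    have h0 := Real.summable_pow_div_factorial l
    have hsum3 : Summable (fun m : ℕ =>
        Real.exp (-l) * (((m:ℝ) - l)^2 * (l ^ m / (m.factorial : ℝ)))) :=
      (((this.add (h1.mul_left (-2*l))).add (h0.mul_left (l^2))).mul_left
        (Real.exp (-l))).congr (fun m => by ring)
    exact hsum3.congr (fun m => by simp only [pw]; ring)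
  -- per-term bound
  have key : ∀ m : ℕ, |pw l m * (F m - fk)|
      ≤ pw l m * (ε/2) + (B * (2 * (k:ℝ) * θ / δ)^2) * (((m:ℝ) - l)^2 * pw l m) := by
    intro m
    rw [abs_mul, abs_of_nonneg (pw_nonneg l hl0 m)]
    by_cases hnear : dist (θ * ((j + k * m : ℕ) : ℝ)) ((k:ℝ) * u) < δ
    · have h1 : |F m - fk| ≤ ε/2 := by
        have := hfδ hnear
        rw [Real.dist_eq] at this
        exact this.le
      have h2 : (0:ℝ) ≤ (B * (2 * (k:ℝ) * θ / δ)^2) * (((m:ℝ) - l)^2 * pw l m) := by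
        have := pw_nonneg l hl0 m
        positivity
      nlinarith [pw_nonneg l hl0 m, mul_le_mul_of_nonneg_left h1 (pw_nonneg l hl0 m)]
    · -- far case
      push_neg at hnear
      rw [Real.dist_eq] at hnear
      have hδj : θ * (j:ℝ) < δ / 2 := by
        have h1 : θ < δ / (2 * (j+1)) := lt_of_lt_of_le hθ2 (min_le_left _ _)
        have h2 : θ * (j:ℝ) ≤ θ * ((j:ℝ)+1) := by nlinarith [hθ1.le]
        have h3 : θ * ((j:ℝ)+1) < δ / (2 * ((j:ℝ)+1)) * ((j:ℝ)+1) := by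
          apply mul_lt_mul_of_pos_right h1
          positivity
        have h4 : δ / (2 * ((j:ℝ)+1)) * ((j:ℝ)+1) = δ / 2 := by
          field_simp
      
        push_cast at h3 ⊢
        linarith
      set D : ℝ := (m:ℝ) - l with hD
      have hsplit : θ * ((j + k * m : ℕ) : ℝ) - (k:ℝ) * u = θ * (j:ℝ) + θ * (k:ℝ) * D := by
        rw [hD, hl]
        push_cast
        field_simp
        ring
      have habs : δ / 2 ≤ θ * (k:ℝ) * |D| := by
        have h5 : δ ≤ |θ * (j:ℝ) + θ * (k:ℝ) * D| := by rw [← hsplit]; exact hnear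
        have h6 : |θ * (j:ℝ) + θ * (k:ℝ) * D| ≤ θ * (j:ℝ) + |θ * (k:ℝ) * D| := by
          calc |θ * (j:ℝ) + θ * (k:ℝ) * D| ≤ |θ * (j:ℝ)| + |θ * (k:ℝ) * D| := abs_add_le _ _
            _ = θ * (j:ℝ) + |θ * (k:ℝ) * D| := by
                rw [abs_of_nonneg (by positivity : (0:ℝ) ≤ θ * (j:ℝ))]
        have h7 : |θ * (k:ℝ) * D| = θ * (k:ℝ) * |D| := by
          rw [abs_mul, abs_of_nonneg (by positivity : (0:ℝ) ≤ θ * (k:ℝ))]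
        linarith
      have hone : 1 ≤ (2 * (k:ℝ) * θ / δ)^2 * D^2 := by
        have hsq : (θ * (k:ℝ) * |D|)^2 = (θ * (k:ℝ))^2 * D^2 := by
          rw [mul_pow, sq_abs]
        have h8 : (δ/2)^2 ≤ (θ * (k:ℝ) * |D|)^2 := by
          apply sq_le_sq' <;> nlinarith [abs_nonneg D, habs]
        rw [hsq] at h8
        have heq : (2 * (k:ℝ) * θ / δ)^2 * D^2 = 4 * ((θ*(k:ℝ))^2 * D^2) / δ^2 := by
          ring
        rw [heq, le_div_iff₀ (by positivity : (0:ℝ) < δ^2)]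
        nlinarith [h8]
      have hfar : |F m - fk| ≤ B := by
        calc |F m - fk| ≤ |F m| + |fk| := abs_sub _ _
          _ ≤ ‖f‖ + ‖f‖ := add_le_add (hFb m) hfkb
          _ = B := by rw [hB]; ring
      have hBle : B ≤ B * ((2 * (k:ℝ) * θ / δ)^2 * D^2) := le_mul_of_one_le_right hB0 hone
      have hεpw : 0 ≤ pw l m * (ε/2) := mul_nonneg (pw_nonneg l hl0 m) (by positivity)
      have hpw1 : pw l m ≤ 1 := pw_le_one l hl0 m
      have hpw0 := pw_nonneg l hl0 m
      calc pw l m * |F m - fk| ≤ pw l m * (B * ((2 * (k:ℝ) * θ / δ)^2 * D^2)) := by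
            exact mul_le_mul_of_nonneg_left (hfar.trans hBle) hpw0
        _ = (B * (2 * (k:ℝ) * θ / δ)^2) * (D^2 * pw l m) := by ring
        _ ≤ pw l m * (ε/2) + (B * (2 * (k:ℝ) * θ / δ)^2) * (D^2 * pw l m) := by linarith
  -- sum the bound
  have hSbound : Summable (fun m => pw l m * (ε/2) + (B * (2 * (k:ℝ) * θ / δ)^2) * (((m:ℝ) - l)^2 * pw l m)) :=
    ((pw_summable l).mul_right (ε/2)).add (S2.mul_left _)
  have hSabs : Summable (fun m => |pw l m * (F m - fk)|) :=
    Summable.of_nonneg_of_le (fun m => abs_nonneg _) key hSbound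
  have hSdiff : Summable (fun m => pw l m * (F m - fk)) := hSabs.of_abs
  have hsplit2 : ∑' m, pw l m * (F m - fk) = (∑' m, pw l m * F m) - fk := by
    have h1 : (fun m => pw l m * (F m - fk)) = fun m => pw l m * F m - pw l m * fk := by
      funext m; ring
    rw [h1, Summable.tsum_sub SF ((pw_summable l).mul_right fk), tsum_mul_right, tsum_pw, one_mul]
  have hbig : |(∑' m, pw l m * F m) - fk| ≤ ε/2 + (B * (2 * (k:ℝ) * θ / δ)^2) * l := by
    rw [← hsplit2]
    have hnorm : Summable (fun m => ‖pw l m * (F m - fk)‖) := hSabs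
    calc |∑' m, pw l m * (F m - fk)| = ‖∑' m, pw l m * (F m - fk)‖ := (Real.norm_eq_abs _).symm
      _ ≤ ∑' m, ‖pw l m * (F m - fk)‖ := norm_tsum_le_tsum_norm hnorm
      _ ≤ ∑' m, (pw l m * (ε/2) + (B * (2 * (k:ℝ) * θ / δ)^2) * (((m:ℝ) - l)^2 * pw l m)) :=
          Summable.tsum_le_tsum (fun m => key m) hnorm hSbound
      _ = ε/2 + (B * (2 * (k:ℝ) * θ / δ)^2) * l := by
          rw [Summable.tsum_add ((pw_summable l).mul_right (ε/2)) (S2.mul_left _),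
            tsum_mul_right, tsum_mul_left, tsum_pw, tsum_sq_pw l hl0, one_mul]
  -- final numeric estimate
  have hfin : (B * (2 * (k:ℝ) * θ / δ)^2) * l < ε/2 := by
    have hθle : θ ≤ ε * δ^2 / (16 * (B+1) * (k:ℝ)^2 * (u+1)) :=
      le_trans hθ2.le (min_le_right _ _)
    have hkpos : (0:ℝ) < (k:ℝ)^2 := by positivity
    have hden : (0:ℝ) < 16 * (B+1) * (k:ℝ)^2 * (u+1) := by positivity
    have hθle' : θ * (16 * (B+1) * (k:ℝ)^2 * (u+1)) ≤ ε * δ^2 := by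
      rw [← le_div_iff₀ hden]
      exact hθle
    have hexp : (B * (2 * (k:ℝ) * θ / δ)^2) * l = 4 * B * (k:ℝ)^2 * u * θ / δ^2 := by
      rw [hl]
      field_simp
      ring
    rw [hexp, div_lt_iff₀ (by positivity : (0:ℝ) < δ^2)]
    have hBu : B * u ≤ (B+1) * (u+1) := by nlinarith
    have e1 : 4 * B * (k:ℝ)^2 * u * θ ≤ 4 * (k:ℝ)^2 * θ * ((B+1)*(u+1)) := by
      nlinarith [mul_le_mul_of_nonneg_left hBu (by positivity : (0:ℝ) ≤ 4 * (k:ℝ)^2 * θ)]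
    nlinarith [mul_pos hε (by positivity : (0:ℝ) < δ^2)]
  rw [Real.dist_eq]
  calc |(∑' m, pw l m * F m) - fk| ≤ ε/2 + (B * (2 * (k:ℝ) * θ / δ)^2) * l := hbig
    _ < ε := by linarith

end D

set_option maxHeartbeats 1000000 in
/-- If `N_θ` has PGF `s ↦ s^j φ((1-s^k)/θ)` where `φ` is the Laplace transform of
`U ≥ 0`, then `θ·N_θ` converges in distribution to `k·U` as `θ → 0`. -/
theorem theta_N_theta_tendsto_kU
    (Ω : Type*) [MeasurableSpace Ω] (P : Measure Ω) [IsProbabilityMeasure P]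
    (U : Ω → ℝ) (hUmeas : Measurable U) (hUpos : ∀ᵐ ω ∂P, 0 ≤ U ω)
    (φ : ℝ → ℝ) (hφ : ∀ v : ℝ, 0 ≤ v → φ v = ∫ ω, Real.exp (-v * U ω) ∂P)
    (j k : ℕ) (hk : 1 ≤ k)
    (N : ℝ → Ω → ℕ) (hNmeas : ∀ θ, Measurable (N θ))
    (hN : ∀ θ : ℝ, 0 < θ → ∀ s ∈ Set.Ioo (0:ℝ) 1,
      ∫ ω, s ^ (N θ ω) ∂P = s ^ j * φ ((1 - s ^ k) / θ)) :
    ∀ f : BoundedContinuousFunction ℝ ℝ,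
      Filter.Tendsto (fun θ : ℝ => ∫ ω, f (θ * (N θ ω : ℝ)) ∂P)
        (nhdsWithin 0 (Set.Ioi 0)) (nhds (∫ ω, f ((k : ℝ) * U ω) ∂P)) := by
  intro f
  classical
  set V : Ω → ℝ := fun ω => max (U ω) 0 with hVdef
  have hVmeas : Measurable V := hUmeas.max measurable_const
  have hV0 : ∀ ω, 0 ≤ V ω := fun ω => le_max_right _ _
  have hVU : ∀ᵐ ω ∂P, V ω = U ω := hUpos.mono fun ω h => max_eq_left h
  have hkpos : 0 < k := hk
  have hinj : Function.Injective (fun m : ℕ => j + k * m) := by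
    intro a b hab
    simp only at hab
    exact Nat.eq_of_mul_eq_mul_left hkpos (Nat.add_left_cancel hab)
  have hfb : ∀ x : ℝ, |f x| ≤ ‖f‖ := fun x => by
    rw [← Real.norm_eq_abs]; exact f.norm_coe_le_norm _
  -- the key identity for fixed θ > 0
  have key : ∀ θ : ℝ, 0 < θ →
      ∫ ω, f (θ * (N θ ω : ℝ)) ∂P
        = ∫ ω, ∑' m : ℕ, pw (V ω / θ) m * f (θ * ((j + k * m : ℕ) : ℝ)) ∂P := by
    intro θ hθ
    have hl0 : ∀ ω, 0 ≤ V ω / θ := fun ω => div_nonneg (hV0 ω) hθ.le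
    have hlm : Measurable fun ω => V ω / θ := hVmeas.div_const θ
    have hpwm : ∀ m : ℕ, Measurable fun ω => pw (V ω / θ) m := by
      intro m
      simp only [pw]
      exact ((Real.measurable_exp.comp hlm.neg).mul (hlm.pow_const m)).div_const _
    have hpw01 : ∀ ω m, 0 ≤ pw (V ω / θ) m ∧ pw (V ω / θ) m ≤ 1 :=
      fun ω m => ⟨pw_nonneg _ (hl0 ω) m, pw_le_one _ (hl0 ω) m⟩
    have int_pw : ∀ m : ℕ, Integrable (fun ω => pw (V ω / θ) m) P := by
      intro m
      refine (integrable_const (1:ℝ)).mono' (hpwm m).aestronglyMeasurable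
        (ae_of_all _ fun ω => ?_)
      rw [Real.norm_eq_abs, abs_of_nonneg (hpw01 ω m).1]
      exact (hpw01 ω m).2
    set c : ℕ → ℝ := fun m => ∫ ω, pw (V ω / θ) m ∂P with hc
    have hc0 : ∀ m, 0 ≤ c m := fun m => integral_nonneg fun ω => (hpw01 ω m).1
    have hcsum : Summable c := by
      refine summable_of_sum_range_le (c := 1) hc0 fun n => ?_
      simp only [hc]
      rw [← integral_finset_sum _ fun m _ => int_pw m]
      calc ∫ ω, ∑ m ∈ Finset.range n, pw (V ω / θ) m ∂P
          ≤ ∫ _ω, (1:ℝ) ∂P := by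
            refine integral_mono (integrable_finset_sum _ fun m _ => int_pw m)
              (integrable_const 1) fun ω => ?_
            calc ∑ m ∈ Finset.range n, pw (V ω / θ) m
                ≤ ∑' m, pw (V ω / θ) m :=
                  Summable.sum_le_tsum _ (fun m _ => (hpw01 ω m).1) (pw_summable _)
              _ = 1 := tsum_pw _
        _ = 1 := by simp
    set p : ℕ → ℝ := fun n => (P (N θ ⁻¹' {n})).toReal with hp
    have hp0 : ∀ n, 0 ≤ p n := fun n => ENNReal.toReal_nonneg
    have hpsum : Summable p := by
      apply ENNReal.summable_toReal
      refine ne_top_of_le_ne_top (measure_ne_top P Set.univ)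
        (tsum_measure_le_measure_univ
          (fun n => ((hNmeas θ) (measurableSet_singleton n)).nullMeasurableSet) ?_)
      intro a b hab
      refine Disjoint.aedisjoint (Disjoint.preimage _ ?_)
      simp [hab]
    set q : ℕ → ℝ := fun n => if j ≤ n ∧ k ∣ n - j then c ((n - j) / k) else 0 with hq
    have hqi : ∀ m : ℕ, q (j + k * m) = c m := by
      intro m
      have h2 : j + k * m - j = k * m := by omega
      simp only [hq, h2]
      rw [if_pos ⟨Nat.le_add_right j (k*m), dvd_mul_right k m⟩,
        Nat.mul_div_cancel_left m hkpos]
    have hqrange : ∀ n : ℕ, q n ≠ 0 → n ∈ Set.range (fun m : ℕ => j + k * m) := by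
      intro n hn
      simp only [hq] at hn
      by_cases hcond : j ≤ n ∧ k ∣ n - j
      · obtain ⟨h1, m, hm⟩ := hcond
        exact ⟨m, show j + k * m = n by omega⟩
      · rw [if_neg hcond] at hn
        exact absurd rfl hn
    have hq0 : ∀ n, 0 ≤ q n := by
      intro n
      simp only [hq]
      split
      · exact hc0 _
      · exact le_refl 0
    have hqsum : Summable q := by
      refine (hinj.summable_iff fun n hn => ?_).1 (hcsum.congr fun m => (hqi m).symm)
      by_contra h
      exact hn (hqrange n h)
    have hcoeff : ∀ s ∈ Set.Ioo (0:ℝ) 1, ∑' n, p n * s ^ n = ∑' n, q n * s ^ n := by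
      intro s hs
      obtain ⟨hs0, hs1⟩ := hs
      have hsk : s ^ k ≤ 1 := pow_le_one₀ hs0.le hs1.le
      have hv : 0 ≤ (1 - s ^ k) / θ := div_nonneg (by linarith) hθ.le
      have L : ∑' n, p n * s ^ n = ∫ ω, s ^ (N θ ω) ∂P :=
        (integral_comp_nat P (N θ) (hNmeas θ) (fun n => s ^ n) 1
          (fun n => by
            rw [abs_of_nonneg (pow_nonneg hs0.le n)]
            exact pow_le_one₀ hs0.le hs1.le)).symm
      have hterm : ∀ m : ℕ, Integrable (fun ω => pw (V ω / θ) m * s ^ (j + k * m)) P :=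
        fun m => (int_pw m).mul_const _
      have heqn : ∀ m : ℕ, ∫ ω, ‖pw (V ω / θ) m * s ^ (j + k * m)‖ ∂P
          = c m * s ^ (j + k * m) := by
        intro m
        rw [← integral_mul_const]
        refine integral_congr_ae (ae_of_all _ fun ω => ?_)
        beta_reduce
        rw [Real.norm_eq_abs, abs_mul, abs_of_nonneg (hpw01 ω m).1,
          abs_of_nonneg (pow_nonneg hs0.le _)]
      have hnorm : Summable (fun m => ∫ ω, ‖pw (V ω / θ) m * s ^ (j + k * m)‖ ∂P) := by
        rw [funext heqn]
        refine Summable.of_nonneg_of_le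
          (fun m => mul_nonneg (hc0 m) (pow_nonneg hs0.le _)) (fun m => ?_) hcsum
        exact mul_le_of_le_one_right (hc0 m) (pow_le_one₀ hs0.le hs1.le)
      have hsupp : Function.support (fun n => q n * s ^ n)
          ⊆ Set.range (fun m : ℕ => j + k * m) :=
        fun n hn => hqrange n (left_ne_zero_of_mul hn)
      have R : ∑' n, q n * s ^ n = ∫ ω, s ^ (N θ ω) ∂P := by
        calc ∑' n, q n * s ^ n
            = ∑' m : ℕ, q (j + k * m) * s ^ (j + k * m) := (hinj.tsum_eq hsupp).symm
          _ = ∑' m : ℕ, c m * s ^ (j + k * m) := tsum_congr fun m => by rw [hqi m]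
          _ = ∑' m : ℕ, ∫ ω, pw (V ω / θ) m * s ^ (j + k * m) ∂P :=
              tsum_congr fun m => by rw [integral_mul_const]
          _ = ∫ ω, ∑' m : ℕ, pw (V ω / θ) m * s ^ (j + k * m) ∂P :=
              integral_tsum_of_summable_integral_norm hterm hnorm
          _ = ∫ ω, s ^ j * Real.exp (-((1 - s ^ k) / θ) * V ω) ∂P :=
              integral_congr_ae (ae_of_all _ fun ω => (expand_exp θ (V ω) s hθ j k).symm)
          _ = s ^ j * ∫ ω, Real.exp (-((1 - s ^ k) / θ) * V ω) ∂P := integral_const_mul _ _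
          _ = s ^ j * ∫ ω, Real.exp (-((1 - s ^ k) / θ) * U ω) ∂P := by
              rw [integral_congr_ae (hVU.mono fun ω h => by rw [h])]
          _ = s ^ j * φ ((1 - s ^ k) / θ) := by rw [hφ _ hv]
          _ = ∫ ω, s ^ (N θ ω) ∂P := (hN θ hθ s ⟨hs0, hs1⟩).symm
      rw [L, R]
    have hpq : p = q := coeff_unique p q hp0 hq0 hpsum hqsum hcoeff
    have Bmain : ∫ ω, f (θ * (N θ ω : ℝ)) ∂P = ∑' n, p n * f (θ * (n : ℝ)) :=
      integral_comp_nat P (N θ) (hNmeas θ) (fun n => f (θ * (n : ℝ))) ‖f‖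
        (fun n => hfb _)
    rw [Bmain, hpq]
    have hsupp2 : Function.support (fun n => q n * f (θ * (n : ℝ)))
        ⊆ Set.range (fun m : ℕ => j + k * m) :=
      fun n hn => hqrange n (left_ne_zero_of_mul hn)
    have htermf : ∀ m : ℕ,
        Integrable (fun ω => pw (V ω / θ) m * f (θ * ((j + k * m : ℕ) : ℝ))) P :=
      fun m => (int_pw m).mul_const _
    have heqnf : ∀ m : ℕ, ∫ ω, ‖pw (V ω / θ) m * f (θ * ((j + k * m : ℕ) : ℝ))‖ ∂P
        = c m * |f (θ * ((j + k * m : ℕ) : ℝ))| := by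
      intro m
      rw [← integral_mul_const]
      refine integral_congr_ae (ae_of_all _ fun ω => ?_)
      beta_reduce
      rw [Real.norm_eq_abs, abs_mul, abs_of_nonneg (hpw01 ω m).1]
    have hnormf : Summable
        (fun m => ∫ ω, ‖pw (V ω / θ) m * f (θ * ((j + k * m : ℕ) : ℝ))‖ ∂P) := by
      rw [funext heqnf]
      refine Summable.of_nonneg_of_le
        (fun m => mul_nonneg (hc0 m) (abs_nonneg _)) (fun m => ?_) (hcsum.mul_right ‖f‖)
      exact mul_le_mul_of_nonneg_left (hfb _) (hc0 m)
    calc ∑' n, q n * f (θ * (n : ℝ))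
        = ∑' m : ℕ, q (j + k * m) * f (θ * ((j + k * m : ℕ) : ℝ)) :=
          (hinj.tsum_eq hsupp2).symm
      _ = ∑' m : ℕ, c m * f (θ * ((j + k * m : ℕ) : ℝ)) := tsum_congr fun m => by rw [hqi m]
      _ = ∑' m : ℕ, ∫ ω, pw (V ω / θ) m * f (θ * ((j + k * m : ℕ) : ℝ)) ∂P :=
          tsum_congr fun m => by rw [integral_mul_const]
      _ = ∫ ω, ∑' m : ℕ, pw (V ω / θ) m * f (θ * ((j + k * m : ℕ) : ℝ)) ∂P :=
          integral_tsum_of_summable_integral_norm htermf hnormf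
  -- measurability of the mixed-Poisson integrand
  have hmeasF : ∀ θ : ℝ, 0 < θ → AEStronglyMeasurable
      (fun ω => ∑' m : ℕ, pw (V ω / θ) m * f (θ * ((j + k * m : ℕ) : ℝ))) P := by
    intro θ hθ
    have hlm : Measurable fun ω => V ω / θ := hVmeas.div_const θ
    have hpwm : ∀ m : ℕ,
        Measurable fun ω => pw (V ω / θ) m * f (θ * ((j + k * m : ℕ) : ℝ)) := by
      intro m
      apply Measurable.mul_const
      simp only [pw]
      exact ((Real.measurable_exp.comp hlm.neg).mul (hlm.pow_const m)).div_const _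
    apply Measurable.aestronglyMeasurable
    apply measurable_of_tendsto_metrizable
      (f := fun n ω => ∑ m ∈ Finset.range n, pw (V ω / θ) m * f (θ * ((j + k * m : ℕ) : ℝ)))
      (fun n => Finset.measurable_sum _ fun m _ => hpwm m)
    rw [tendsto_pi_nhds]
    intro ω
    exact (summable_pw_mul_of_bdd _ (div_nonneg (hV0 ω) hθ.le) _ ‖f‖
      (fun m => hfb _)).hasSum.tendsto_sum_nat
  have lim : Tendsto
      (fun θ : ℝ => ∫ ω, ∑' m : ℕ, pw (V ω / θ) m * f (θ * ((j + k * m : ℕ) : ℝ)) ∂P)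
      (nhdsWithin 0 (Set.Ioi 0)) (nhds (∫ ω, f ((k : ℝ) * U ω) ∂P)) := by
    have htarget : ∫ ω, f ((k : ℝ) * U ω) ∂P = ∫ ω, f ((k : ℝ) * V ω) ∂P :=
      (integral_congr_ae (hVU.mono fun ω h => by rw [h])).symm
    rw [htarget]
    refine tendsto_integral_filter_of_dominated_convergence (fun _ => ‖f‖) ?_ ?_
      (integrable_const _) ?_
    · filter_upwards [self_mem_nhdsWithin] with θ hθ using hmeasF θ (Set.mem_Ioi.1 hθ)
    · filter_upwards [self_mem_nhdsWithin] with θ hθ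
      refine ae_of_all _ fun ω => ?_
      rw [Real.norm_eq_abs]
      exact abs_tsum_pw_mul_le _ (div_nonneg (hV0 ω) (Set.mem_Ioi.1 hθ).le) _ ‖f‖
        (fun m => hfb _)
    · exact ae_of_all _ fun ω => tendsto_G f j k hk (V ω) (hV0 ω)
  refine lim.congr' ?_
  filter_upwards [self_mem_nhdsWithin] with θ hθ using (key θ (Set.mem_Ioi.1 hθ)).symm
end

section
/- Suppose f and h are characteristic functions with f(t) ≠ 0 for all t, and for every 0 < c < 1 the function f_c(t) = f(t)/f(ct) is a characteristic function, and h(t) = φ(−log f(t)) where φ is a self-decomposable Laplace transform satisfying φ(s) = φ(cs)φ_c(s) and −log f(ct) = c^α(−log f(t)) for some 0 < α ≤ 2 (strict stability). Then for every 0 < c < 1, h(t)/h(c^{1/α} t) = φ_c(−log f(t)), which is a characteristic function; hence h is in class L. -/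
open MeasureTheory

/-- `f` is a characteristic function of a probability distribution on `ℝ`. -/
def IsCF (f : ℝ → ℂ) : Prop :=
  ∃ μ : Measure ℝ, IsProbabilityMeasure μ ∧
    ∀ t, f t = ∫ x, Complex.exp ((t:ℂ) * (x:ℂ) * Complex.I) ∂μ

/-- `φ` is the Laplace transform of a probability distribution on `[0,∞)`. -/
def IsLT (φ : ℂ → ℂ) : Prop :=
  ∃ μ : Measure ℝ, IsProbabilityMeasure μ ∧ μ (Set.Iio (0:ℝ)) = 0 ∧
    ∀ z : ℂ, 0 ≤ z.re → φ z = ∫ s, Complex.exp (-z * (s:ℂ)) ∂μ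


lemma norm_exp_txI (t x : ℝ) : ‖Complex.exp ((t:ℂ) * (x:ℂ) * Complex.I)‖ = 1 := by
  rw [Complex.norm_exp]
  simp [Complex.mul_re]

lemma isCF_zero {g : ℝ → ℂ} (hg : IsCF g) : g 0 = 1 := by
  obtain ⟨μ, hμ, hrep⟩ := hg
  simp [hrep 0]

lemma isCF_norm_le {g : ℝ → ℂ} (hg : IsCF g) (t : ℝ) : ‖g t‖ ≤ 1 := by
  obtain ⟨μ, hμ, hrep⟩ := hg
  rw [hrep t]
  calc ‖∫ x, Complex.exp ((t:ℂ) * (x:ℂ) * Complex.I) ∂μ‖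
      ≤ ∫ x, ‖Complex.exp ((t:ℂ) * (x:ℂ) * Complex.I)‖ ∂μ := norm_integral_le_integral_norm _
    _ = ∫ _x, (1:ℝ) ∂μ := by
        apply integral_congr_ae
        exact Filter.Eventually.of_forall fun x => norm_exp_txI t x
    _ = 1 := by simp

lemma isCF_continuous {g : ℝ → ℂ} (hg : IsCF g) : Continuous g := by
  obtain ⟨μ, hμ, hrep⟩ := hg
  have : Continuous fun t : ℝ => ∫ x, Complex.exp ((t:ℂ) * (x:ℂ) * Complex.I) ∂μ := by
    apply continuous_of_dominated (bound := fun _ => (1:ℝ))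
    · intro t
      exact (Complex.continuous_exp.comp (by continuity)).aestronglyMeasurable
    · intro t
      exact Filter.Eventually.of_forall fun x => le_of_eq (norm_exp_txI t x)
    · exact integrable_const 1
    · exact Filter.Eventually.of_forall fun x =>
        Complex.continuous_exp.comp (by continuity)
  exact this.congr fun t => (hrep t).symm

lemma cos_ineq (θ : ℝ) : 1 - Real.cos (2*θ) ≤ 4 * (1 - Real.cos θ) := by
  have h1 := Real.neg_one_le_cos θ
  have h2 := Real.cos_le_one θ
  have h3 : Real.cos (2*θ) = 2 * Real.cos θ ^ 2 - 1 := Real.cos_two_mul θ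
  nlinarith [sq_nonneg (Real.cos θ - 1)]

lemma isCF_re_integral {g : ℝ → ℂ} {μ : Measure ℝ} [IsProbabilityMeasure μ]
    (hrep : ∀ t, g t = ∫ x, Complex.exp ((t:ℂ) * (x:ℂ) * Complex.I) ∂μ) (t : ℝ) :
    (g t).re = ∫ x, Real.cos (t * x) ∂μ := by
  have hint : Integrable (fun x : ℝ => Complex.exp ((t:ℂ) * (x:ℂ) * Complex.I)) μ := by
    apply Integrable.mono' (integrable_const (1:ℝ))
    · exact (Complex.continuous_exp.comp (by continuity)).aestronglyMeasurable
    · exact Filter.Eventually.of_forall fun x => le_of_eq (norm_exp_txI t x)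
  rw [hrep t, ← RCLike.re_to_complex, ← integral_re hint]
  apply integral_congr_ae
  refine Filter.Eventually.of_forall fun x => ?_
  have : (t:ℂ) * (x:ℂ) * Complex.I = ((t*x : ℝ):ℂ) * Complex.I := by push_cast; ring
  show RCLike.re (Complex.exp ((t:ℂ) * (x:ℂ) * Complex.I)) = Real.cos (t*x)
  rw [RCLike.re_to_complex, this, Complex.exp_ofReal_mul_I_re]

lemma isCF_cos_ineq {g : ℝ → ℂ} (hg : IsCF g) (t : ℝ) :
    1 - (g (2*t)).re ≤ 4 * (1 - (g t).re) := by
  obtain ⟨μ, hμ, hrep⟩ := hg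
  have hcos : ∀ u : ℝ, Integrable (fun x : ℝ => Real.cos (u * x)) μ := by
    intro u
    apply Integrable.mono' (integrable_const (1:ℝ))
    · exact (Real.continuous_cos.comp (by continuity)).aestronglyMeasurable
    · exact Filter.Eventually.of_forall fun x => by
        simpa using Real.abs_cos_le_one (u*x)
  rw [isCF_re_integral hrep, isCF_re_integral hrep]
  have h1 : (1:ℝ) = ∫ _x, (1:ℝ) ∂μ := by simp
  have key : ∫ x, (1 - Real.cos (2*t*x)) ∂μ ≤ ∫ x, 4 * (1 - Real.cos (t*x)) ∂μ := by
    apply integral_mono ((integrable_const 1).sub (hcos (2*t))) (((integrable_const 1).sub (hcos t)).const_mul 4)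
    intro x
    have := cos_ineq (t*x)
    simp only []
    calc 1 - Real.cos (2*t*x) = 1 - Real.cos (2*(t*x)) := by ring_nf
      _ ≤ 4 * (1 - Real.cos (t*x)) := cos_ineq (t*x)
  rw [integral_sub (integrable_const 1) (hcos (2*t))] at key
  rw [integral_const_mul, integral_sub (integrable_const 1) (hcos t)] at key
  simp at key
  linarith

lemma classL_ne_zero (h : ℝ → ℂ) (hcont : Continuous h) (h0 : h 0 = 1)
    (hdec : ∀ c' : ℝ, 0 < c' → c' < 1 → ∃ g : ℝ → ℂ, IsCF g ∧ ∀ t, h t = h (c' * t) * g t) :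
    ∀ u, h u ≠ 0 := by
  intro u hu
  have hu0 : u ≠ 0 := by rintro rfl; rw [h0] at hu; exact one_ne_zero hu
  set S : Set ℝ := {t : ℝ | t ∈ Set.Icc (0:ℝ) 1 ∧ h (t * u) = 0} with hS
  have hne : S.Nonempty := ⟨1, ⟨⟨zero_le_one, le_refl 1⟩, by simpa using hu⟩⟩
  have hbdd : BddBelow S := ⟨0, fun t ht => ht.1.1⟩
  have hclosed : IsClosed S := by
    apply IsClosed.inter isClosed_Icc
    exact isClosed_eq (hcont.comp (continuous_id.mul continuous_const)) continuous_const
  set T := sInf S with hT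
  have hTS : T ∈ S := hclosed.csInf_mem hne hbdd
  have hT0 : 0 ≤ T := hTS.1.1
  have hTz : h (T * u) = 0 := hTS.2
  have hTpos : 0 < T := by
    rcases lt_or_eq_of_le hT0 with h' | h'
    · exact h'
    · exfalso; rw [← h', zero_mul, h0] at hTz; exact one_ne_zero hTz
  have hlt : ∀ t : ℝ, 0 ≤ t → t < T → h (t * u) ≠ 0 := by
    intro t ht0 htT hz
    have : t ∈ S := ⟨⟨ht0, le_trans htT.le hTS.1.2⟩, hz⟩
    exact absurd (csInf_le hbdd this) (not_le.mpr htT)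
  -- a = h(T/2 * u) ≠ 0
  set a := h ((T/2) * u) with ha
  have hane : a ≠ 0 := hlt (T/2) (by linarith) (by linarith)
  have hapos : 0 < ‖a‖ := norm_pos_iff.mpr hane
  -- continuity of c' ↦ h (c' * ((T/2)*u)) at 1
  have hca : ContinuousAt (fun c' : ℝ => h (c' * ((T/2) * u))) 1 := by
    exact (hcont.comp (continuous_id.mul continuous_const)).continuousAt
  rw [Metric.continuousAt_iff] at hca
  obtain ⟨δ, hδ, hδp⟩ := hca (‖a‖/8) (by positivity)
  set c' := max (1/2 : ℝ) (1 - δ/2) with hc'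
  have hc0 : 0 < c' := lt_of_lt_of_le (by norm_num) (le_max_left _ _)
  have hc1 : c' < 1 := by
    apply max_lt (by norm_num)
    linarith
  have hcd : dist c' 1 < δ := by
    rw [Real.dist_eq, abs_lt]
    constructor
    · have : 1 - δ/2 ≤ c' := le_max_right _ _
      linarith
    · have : c' < 1 := hc1
      linarith
  obtain ⟨g, hgCF, hgdec⟩ := hdec c' hc0 hc1
  have hb := hδp hcd
  rw [one_mul] at hb
  set b := h (c' * ((T/2) * u)) with hbdef
  have hbnorm : ‖a‖ * (7/8) ≤ ‖b‖ := by
    have h1 : ‖a - b‖ < ‖a‖/8 := by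
      rw [← norm_sub_rev]
      simpa [Complex.dist_eq] using hb
    have := norm_sub_norm_le a b
    linarith [norm_sub_norm_le a b]
  have hbne : b ≠ 0 := by
    intro hz
    rw [hz, norm_zero] at hbnorm
    nlinarith
  -- g (T*u) = 0
  have hgT : g (T * u) = 0 := by
    have := hgdec (T * u)
    rw [hTz] at this
    have hne2 : h (c' * (T * u)) ≠ 0 := by
      have : c' * (T*u) = (c'*T) * u := by ring
      rw [this]
      exact hlt (c'*T) (by positivity) (by nlinarith)
    exact (mul_eq_zero.mp this.symm).resolve_left hne2
  -- g ((T/2)*u) = a / b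
  have hghalf : g ((T/2) * u) = a / b := by
    have := hgdec ((T/2) * u)
    rw [← ha, ← hbdef] at this
    rw [eq_div_iff hbne]; linear_combination -this
  -- CF inequality
  have hineq := isCF_cos_ineq hgCF ((T/2) * u)
  have h2 : 2 * ((T/2) * u) = T * u := by ring
  rw [h2, hgT, hghalf] at hineq
  simp only [Complex.zero_re] at hineq
  -- bound Re (a/b)
  have hdist : ‖a/b - 1‖ < 1/7 := by
    have hab : ‖a - b‖ < ‖a‖/8 := by
      rw [← norm_sub_rev]
      simpa [Complex.dist_eq] using hb
    have : a/b - 1 = (a - b)/b := by field_simp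
    rw [this, norm_div]
    rw [div_lt_iff₀ (norm_pos_iff.mpr hbne)]
    calc ‖a - b‖ < ‖a‖/8 := hab
      _ ≤ (1/7) * (‖a‖ * (7/8)) := by linarith
      _ ≤ (1/7) * ‖b‖ := by linarith
  have hre : 1 - (a/b).re ≤ ‖a/b - 1‖ := by
    calc 1 - (a/b).re = -((a/b - 1).re) := by simp
      _ ≤ |(a/b - 1).re| := neg_le_abs _
      _ ≤ ‖a/b - 1‖ := Complex.abs_re_le_norm _
  linarith

lemma neg_log_re_nonneg {w : ℂ} (h1 : ‖w‖ ≤ 1) : 0 ≤ (-Complex.log w).re := by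
  rw [Complex.neg_re, Complex.log_re]
  have : Real.log ‖w‖ ≤ 0 := Real.log_nonpos (norm_nonneg w) h1
  linarith

lemma stable_f_zero (α : ℝ) (hα : 0 < α) (f : ℝ → ℂ) (hfne : ∀ t, f t ≠ 0)
    (hss : ∀ b : ℝ, 0 < b → ∀ t : ℝ,
      -Complex.log (f (b * t)) = ((b ^ α : ℝ) : ℂ) * (-Complex.log (f t))) :
    f 0 = 1 := by
  have h2 := hss 2 (by norm_num) 0
  rw [mul_zero] at h2
  have h2α : (1:ℝ) < 2 ^ α := Real.one_lt_rpow_iff_of_pos (by norm_num) |>.mpr (Or.inl ⟨by norm_num, hα⟩)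
  have : Complex.log (f 0) = 0 := by
    have hne : ((2 ^ α : ℝ) : ℂ) - 1 ≠ 0 := by
      intro hz
      have : ((2 ^ α : ℝ) : ℂ) = 1 := by linear_combination hz
      rw [show (1:ℂ) = ((1:ℝ):ℂ) by norm_num] at this
      exact absurd (Complex.ofReal_inj.mp this) (by linarith)
    have : (((2 ^ α : ℝ) : ℂ) - 1) * Complex.log (f 0) = 0 := by linear_combination h2
    exact (mul_eq_zero.mp this).resolve_left hne
  rw [← Complex.exp_log (hfne 0), this, Complex.exp_zero]

lemma stable_exp_eq (α : ℝ) (hα : 0 < α) (f : ℝ → ℂ) (hfne : ∀ t, f t ≠ 0)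
    (hss : ∀ b : ℝ, 0 < b → ∀ t : ℝ,
      -Complex.log (f (b * t)) = ((b ^ α : ℝ) : ℂ) * (-Complex.log (f t)))
    (s : ℝ) (hs : 0 ≤ s) (t : ℝ) :
    Complex.exp (-(-Complex.log (f t)) * (s:ℂ)) = f ((s ^ (1/α) : ℝ) * t) := by
  rcases eq_or_lt_of_le hs with h0 | hpos
  · rw [← h0]
    rw [Real.zero_rpow (by positivity), zero_mul, stable_f_zero α hα f hfne hss]
    simp
  · have hb : 0 < (s ^ (1/α) : ℝ) := Real.rpow_pos_of_pos hpos _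
    have hbα : ((s ^ (1/α) : ℝ)) ^ α = s := by
      rw [← Real.rpow_mul hs, one_div_mul_cancel (ne_of_gt hα), Real.rpow_one]
    have hkey := hss (s ^ (1/α)) hb t
    rw [hbα] at hkey
    have hlog : Complex.log (f ((s ^ (1/α) : ℝ) * t)) = (s:ℂ) * Complex.log (f t) := by
      linear_combination -hkey
    rw [← Complex.exp_log (hfne ((s ^ (1/α) : ℝ) * t)), hlog]
    ring_nf

lemma mixture_isCF (α : ℝ) (hα : 0 < α) (f : ℝ → ℂ) (hfCF : IsCF f) (hfne : ∀ t, f t ≠ 0)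
    (hss : ∀ b : ℝ, 0 < b → ∀ t : ℝ,
      -Complex.log (f (b * t)) = ((b ^ α : ℝ) : ℂ) * (-Complex.log (f t)))
    (ψ : ℂ → ℂ) (hψ : IsLT ψ) :
    IsCF (fun t => ψ (-Complex.log (f t))) := by
  obtain ⟨μf, hμf, hf⟩ := hfCF
  obtain ⟨ν, hν, hν0, hψr⟩ := hψ
  have hcm : Continuous fun p : ℝ × ℝ => (p.1 ^ (1/α) : ℝ) * p.2 :=
    ((Real.continuous_rpow_const (by positivity)).comp continuous_fst).mul continuous_snd
  have hmeas : Measurable fun p : ℝ × ℝ => (p.1 ^ (1/α) : ℝ) * p.2 := hcm.measurable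
  have hexp : ∀ u : ℝ, Continuous fun x : ℝ => Complex.exp ((u:ℂ) * (x:ℂ) * Complex.I) := by
    intro u; continuity
  refine ⟨Measure.map (fun p : ℝ × ℝ => (p.1 ^ (1/α) : ℝ) * p.2) (ν.prod μf),
    Measure.isProbabilityMeasure_map hmeas.aemeasurable, fun t => ?_⟩
  have hae : ∀ᵐ s ∂ν, 0 ≤ s := by
    rw [MeasureTheory.ae_iff]
    convert hν0 using 2
    ext s
    simp [Set.Iio, not_le]
  -- RHS computation
  rw [integral_map hmeas.aemeasurable ((hexp t).aestronglyMeasurable)]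
  have hintp : Integrable
      (fun p : ℝ × ℝ => Complex.exp ((t:ℂ) * (((p.1 ^ (1/α) : ℝ) * p.2 : ℝ):ℂ) * Complex.I))
      (ν.prod μf) := by
    apply Integrable.mono' (integrable_const (1:ℝ))
    · exact ((hexp t).comp hcm).aestronglyMeasurable
    · exact Filter.Eventually.of_forall fun p => le_of_eq (norm_exp_txI t _)
  rw [MeasureTheory.integral_prod _ hintp]
  have hinner : ∀ s : ℝ,
      (∫ x, Complex.exp ((t:ℂ) * (((s ^ (1/α) : ℝ) * x : ℝ):ℂ) * Complex.I) ∂μf)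
        = f ((s ^ (1/α) : ℝ) * t) := by
    intro s
    rw [hf ((s ^ (1/α) : ℝ) * t)]
    apply integral_congr_ae
    refine Filter.Eventually.of_forall fun x => ?_
    push_cast
    ring_nf
  show ψ (-Complex.log (f t)) = _
  rw [hψr _ (neg_log_re_nonneg (isCF_norm_le ⟨μf, hμf, hf⟩ t))]
  apply integral_congr_ae
  filter_upwards [hae] with s hs
  rw [stable_exp_eq α hα f hfne hss s hs t, ← hinner s]

/-- If `f` is a strictly stable CF in class L and `φ` is a self-decomposable LT with
components `φ_c`, then `h = φ(-log f)` satisfies `h(t)/h(c^{1/α}t) = φ_c(-log f(t))`,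
a characteristic function; hence `h` is in class L. -/
theorem phi_mixture_selfdecomposable_structure
    (α : ℝ) (hα : 0 < α ∧ α ≤ 2)
    (f : ℝ → ℂ) (hfCF : IsCF f) (hfne : ∀ t, f t ≠ 0)
    (hfL : ∀ c : ℝ, 0 < c → c < 1 → IsCF (fun t => f t / f (c * t)))
    (hss : ∀ b : ℝ, 0 < b → ∀ t : ℝ,
      -Complex.log (f (b * t)) = ((b ^ α : ℝ) : ℂ) * (-Complex.log (f t)))
    (φ : ℂ → ℂ) (hφ : IsLT φ)
    (φc : ℝ → ℂ → ℂ)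
    (hsd : ∀ c : ℝ, 0 < c → c < 1 → IsLT (φc c) ∧
      ∀ z : ℂ, 0 ≤ z.re → φ z = φ ((c:ℂ) * z) * φc c z)
    (h : ℝ → ℂ) (hh : ∀ t, h t = φ (-Complex.log (f t))) :
    (∀ c : ℝ, 0 < c → c < 1 →
      (∀ t : ℝ, h t / h (c ^ (1/α) * t) = φc c (-Complex.log (f t))) ∧
      IsCF (fun t => φc c (-Complex.log (f t)))) ∧
    (∀ c' : ℝ, 0 < c' → c' < 1 → ∃ hc : ℝ → ℂ, IsCF hc ∧
      ∀ t : ℝ, h t = h (c' * t) * hc t) := by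
  obtain ⟨hα0, hα2⟩ := hα
  have hfb : ∀ t, ‖f t‖ ≤ 1 := isCF_norm_le hfCF
  have hzre : ∀ t, 0 ≤ (-Complex.log (f t)).re := fun t => neg_log_re_nonneg (hfb t)
  have hdecomp : ∀ c' : ℝ, 0 < c' → c' < 1 →
      (∀ t, h t = h (c' * t) * φc (c' ^ α) (-Complex.log (f t))) ∧
      IsCF (fun t => φc (c' ^ α) (-Complex.log (f t))) := by
    intro c' hc0 hc1
    have hcα0 : 0 < c' ^ α := Real.rpow_pos_of_pos hc0 α
    have hcα1 : c' ^ α < 1 := Real.rpow_lt_one hc0.le hc1 hα0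
    obtain ⟨hLT, hfac⟩ := hsd (c' ^ α) hcα0 hcα1
    constructor
    · intro t
      rw [hh t, hh (c' * t), hss c' hc0 t]
      exact hfac _ (hzre t)
    · exact mixture_isCF α hα0 f hfCF hfne hss _ hLT
  have hhCF : IsCF h := by
    have hm := mixture_isCF α hα0 f hfCF hfne hss φ hφ
    have he : h = fun t => φ (-Complex.log (f t)) := funext hh
    rw [he]; exact hm
  have hne : ∀ u, h u ≠ 0 :=
    classL_ne_zero h (isCF_continuous hhCF) (isCF_zero hhCF)
      (fun c' a b => ⟨_, (hdecomp c' a b).2, (hdecomp c' a b).1⟩)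
  constructor
  · intro c hc0 hc1
    have hc'0 : 0 < c ^ (1/α) := Real.rpow_pos_of_pos hc0 _
    have hc'1 : c ^ (1/α) < 1 := Real.rpow_lt_one hc0.le hc1 (by positivity)
    have hcc : (c ^ (1/α)) ^ α = c := by
      rw [← Real.rpow_mul hc0.le, one_div_mul_cancel hα0.ne', Real.rpow_one]
    obtain ⟨hd, hCF⟩ := hdecomp (c ^ (1/α)) hc'0 hc'1
    rw [hcc] at hd hCF
    refine ⟨fun t => ?_, hCF⟩
    rw [div_eq_iff (hne _)]
    linear_combination hd t
  · intro c' hc0 hc1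
    obtain ⟨hd, hCF⟩ := hdecomp c' hc0 hc1
    exact ⟨_, hCF, hd⟩
end
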